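/- Dilworth's theorem fails for infinite posets: there exists a poset of infinite width in which every antichain is finite, hence which cannot be partitioned into finitely many chains, even though the supremum argument would suggest otherwise; concretely, there is a poset with all antichains finite which admits no partition into κ chains for any finite κ. -/

import Mathlib

lemma perles_aux_antichain (n : ℕ) :
    IsAntichain (· ≤ ·) (((Finset.range n).image (fun i => (i, n - i)) : Finset (ℕ × ℕ)) : Set (ℕ × ℕ)) := by
  intro a ha b hb hab hle
  simp only [Finset.coe_image, Set.mem_image, Finset.mem_coe, Finset.mem_range] at ha hb
  obtain ⟨i, hi, rfl⟩ := ha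
  obtain ⟨j, hj, rfl⟩ := hb
  obtain ⟨h1, h2⟩ := hle
  simp only at h1 h2
  have : i = j := le_antisymm h1 (by omega)
  exact hab (by simp [this])

theorem perles_dilworth_fails_infinite :
    ∃ (P : Type) (inst : PartialOrder P),
      (∀ A : Set P, IsAntichain inst.le A → A.Finite) ∧
      (∀ n : ℕ, ∃ A : Finset P, IsAntichain inst.le (A : Set P) ∧ n ≤ A.card) ∧
      ∀ (κ : ℕ) (C : Fin κ → Set P), (∀ i, IsChain inst.le (C i)) →
        ¬ ∀ x : P, ∃ i, x ∈ C i := by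
  refine ⟨ℕ × ℕ, inferInstance, ?_, ?_, ?_⟩
  · intro A hA
    have hpwo : (Set.univ : Set (ℕ × ℕ)).IsPWO := by
      have h1 : (Set.univ : Set ℕ).IsPWO := (Set.isWF_univ_iff.2 inferInstance).isPWO
      have := h1.prod h1
      simpa [Set.univ_prod_univ] using this
    exact hA.finite_of_partiallyWellOrderedOn (hpwo.mono (Set.subset_univ A))
  · intro n
    refine ⟨(Finset.range n).image (fun i => (i, n - i)), perles_aux_antichain n, ?_⟩
    rw [Finset.card_image_of_injective _ (fun a b h => by simpa using (Prod.mk.injEq _ _ _ _ ▸ h).1)]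
    simp
  · intro κ C hC hcov
    -- take antichain of size κ+1
    set A := (Finset.range (κ + 1)).image (fun i => (i, κ + 1 - i)) with hA
    have hanti := perles_aux_antichain (κ + 1)
    have hcard : κ < A.card := by
      rw [hA, Finset.card_image_of_injective _ (fun a b h => by simpa using (Prod.mk.injEq _ _ _ _ ▸ h).1)]
      simp
    -- map each element of A to a chain index
    choose f hf using hcov
    have := Finset.exists_ne_map_eq_of_card_lt_of_maps_to (by simpa using hcard)
      (fun x (_ : x ∈ A) => Finset.mem_univ (f x))
    obtain ⟨x, hx, y, hy, hxy, hfeq⟩ := this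
    have hchain := hC (f x)
    have := hchain (hf x) (hfeq ▸ hf y) hxy
    rcases this with h | h
    · exact hanti (Finset.mem_coe.2 hx) (Finset.mem_coe.2 hy) hxy h
    · exact hanti (Finset.mem_coe.2 hy) (Finset.mem_coe.2 hx) (Ne.symm hxy) h
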